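/- arXiv:1604.04206 — 3 statements merged into one kernel-verified Lean document; each statement's English description precedes it below -/
import Mathlib

section
/- For integers i ≥ 2 and l ≥ 2 with l ≤ 3^i, one has l ≤ 3^i, and if moreover 3^i < 9l/8, then any multiset of positive integer arities {a_1,...,a_h} with a_1·⋯·a_h ≥ l and sum a_1+⋯+a_h < 3i does not exist; that is, 3i is the minimal possible sum of arities whose product is at least l. -/
lemma cube_le_three_pow : ∀ a : ℕ, a ^ 3 ≤ 3 ^ a := by
  intro a
  induction a with
  | zero => simp
  | succ n ih =>
    rcases Nat.lt_or_ge n 3 with h | h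
    · interval_cases n <;> decide
    · have a1 : 3 * n ^ 2 ≤ n ^ 3 := by
        calc 3 * n ^ 2 ≤ n * n ^ 2 := Nat.mul_le_mul_right _ h
          _ = n ^ 3 := by ring
      have a2 : 3 * n + 1 ≤ n ^ 3 := by nlinarith
      have h3 : (n + 1) ^ 3 ≤ 3 * n ^ 3 := by nlinarith
      calc (n + 1) ^ 3 ≤ 3 * n ^ 3 := h3
        _ ≤ 3 * 3 ^ n := by omega
        _ = 3 ^ (n + 1) := by ring

lemma prod_cube_le (as : List ℕ) : as.prod ^ 3 ≤ 3 ^ as.sum := by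
  induction as with
  | nil => simp
  | cons a t ih =>
    simp only [List.prod_cons, List.sum_cons, mul_pow, pow_add]
    exact Nat.mul_le_mul (cube_le_three_pow a) ih

/-- Case 1 of Theorem 1: if `l ≤ 3^i < 9l/8` (with `i ≥ 2`, `l ≥ 2`), then no
multiset of positive integer arities with product at least `l` has sum of
arities strictly smaller than `3i`; i.e. `3i` is the minimal possible sum. -/
theorem case1_sum_minimal (i l : ℕ) (hi : 2 ≤ i) (hl : 2 ≤ l)
    (h1 : l ≤ 3 ^ i) (h2 : 8 * 3 ^ i < 9 * l) :
    ¬ ∃ as : List ℕ, (∀ a ∈ as, 0 < a) ∧ l ≤ as.prod ∧ as.sum < 3 * i := by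
  rintro ⟨as, _, hprod, hsum⟩
  have hc : as.prod ^ 3 ≤ 3 ^ as.sum := prod_cube_le as
  have hs : as.sum ≤ 3 * i - 1 := by omega
  have hc2 : l ^ 3 ≤ 3 ^ (3 * i - 1) :=
    le_trans (Nat.pow_le_pow_left hprod 3)
      (le_trans hc (Nat.pow_le_pow_right (by norm_num) hs))
  -- cube the strict inequality 8·3^i < 9l
  have hcube : (8 * 3 ^ i) ^ 3 < (9 * l) ^ 3 := Nat.pow_lt_pow_left h2 (by norm_num)
  have key : 512 * 3 ^ (3 * i) < 729 * l ^ 3 := by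
    have : (8 * 3 ^ i) ^ 3 = 512 * 3 ^ (3 * i) := by
      rw [mul_pow, ← pow_mul]; ring_nf
    have h9 : (9 * l) ^ 3 = 729 * l ^ 3 := by ring
    rw [this, h9] at hcube; exact hcube
  have h3i : 3 ^ (3 * i) = 3 ^ (3 * i - 1) * 3 := by
    rw [← pow_succ]
    congr 1
    omega
  have : 729 * l ^ 3 ≤ 729 * 3 ^ (3 * i - 1) := Nat.mul_le_mul_left _ hc2
  have : 729 * 3 ^ (3 * i - 1) < 729 * 3 ^ (3 * i - 1) := by
    calc 729 * 3 ^ (3 * i - 1) = 243 * 3 ^ (3 * i) := by rw [h3i]; ring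
      _ < 512 * 3 ^ (3 * i) := by
          have : 0 < 3 ^ (3 * i) := Nat.pow_pos (by norm_num)
          nlinarith
      _ < 729 * l ^ 3 := key
      _ ≤ 729 * 3 ^ (3 * i - 1) := ‹_›
  exact lt_irrefl _ this
end

section
/- In each of the eleven cases of Theorem 1, the prescribed multiset of arities (h_5 fives, h_4 fours, h_3 threes, h_2 twos) covers the message: 5^{h_5}·4^{h_4}·3^{h_3}·2^{h_2} ≥ l. -/
/-- The eleven case conditions of Theorem 1, with the rational inequalities
(e.g. `3^i < 9l/8`) written in cross-multiplied integer form. -/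
def conds (l i : ℕ) : Fin 11 → Prop := fun k =>
  match k with
  | 0 => (l ≤ 3 ^ i ∧ 8 * 3 ^ i < 9 * l) ∨ (i < 2 ∧ 2 * 3 ^ i < 3 * l)
  | 1 => (9 * l ≤ 8 * 3 ^ i ∧ 64 * 3 ^ i < 81 * l ∧ 2 ≤ i) ∨
      (2 ≤ i ∧ i < 4 ∧ 81 * l < 64 * 3 ^ i ∧ 20 * 3 ^ i < 27 * l)
  | 2 => 81 * l ≤ 64 * 3 ^ i ∧ 20 * 3 ^ i < 27 * l ∧ 4 ≤ i
  | 3 => 27 * l ≤ 20 * 3 ^ i ∧ 2 * 3 ^ i < 3 * l ∧ 3 ≤ i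
  | 4 => (3 * l ≤ 2 * 3 ^ i ∧ 16 * 3 ^ i < 27 * l ∧ 1 ≤ i) ∨
      (3 * l ≤ 2 * 3 ^ i ∧ 5 * 3 ^ i < 9 * l ∧ i < 3) ∨
      (9 * l ≤ 5 * 3 ^ i ∧ 4 * 3 ^ i < 9 * l ∧ i < 2)
  | 5 => 27 * l ≤ 16 * 3 ^ i ∧ 5 * 3 ^ i < 9 * l ∧ 3 ≤ i
  | 6 => (9 * l ≤ 5 * 3 ^ i ∧ 40 * 3 ^ i < 81 * l ∧ 2 ≤ i) ∨
      (81 * l ≤ 40 * 3 ^ i ∧ 4 * 3 ^ i < 9 * l ∧ 2 ≤ i ∧ i ≤ 3)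
  | 7 => 81 * l ≤ 40 * 3 ^ i ∧ 4 * 3 ^ i < 9 * l ∧ 4 ≤ i
  | 8 => (9 * l ≤ 4 * 3 ^ i ∧ 32 * 3 ^ i < 81 * l ∧ 2 ≤ i) ∨
      (81 * l ≤ 32 * 3 ^ i ∧ 3 ^ i < 3 * l ∧ i = 2) ∨
      (81 * l ≤ 32 * 3 ^ i ∧ 10 * 3 ^ i < 27 * l ∧ i < 4)
  | 9 => 81 * l ≤ 32 * 3 ^ i ∧ 10 * 3 ^ i < 27 * l ∧ 4 ≤ i
  | 10 => 27 * l ≤ 10 * 3 ^ i ∧ 3 ^ i < 3 * l ∧ 3 ≤ i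

/-- In each of the eleven cases of Theorem 1, the prescribed multiset of arities
(`h₅` fives, `h₄` fours, `h₃` threes, `h₂` twos) covers the message:
`5^h₅ · 4^h₄ · 3^h₃ · 2^h₂ ≥ l`. -/
theorem eleven_cases_cover (l i : ℕ) (hl : 2 ≤ l)
    (hi : l ≤ 3 ^ i) (hmin : ∀ j : ℕ, l ≤ 3 ^ j → i ≤ j) :
    (conds l i 0 → l ≤ 3 ^ i) ∧
    (conds l i 1 → l ≤ 4 * 3 ^ (i - 2) * 2) ∧
    (conds l i 2 → l ≤ 4 ^ 3 * 3 ^ (i - 4)) ∧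
    (conds l i 3 → l ≤ 5 * 4 * 3 ^ (i - 3)) ∧
    (conds l i 4 → l ≤ 3 ^ (i - 1) * 2) ∧
    (conds l i 5 → l ≤ 4 ^ 2 * 3 ^ (i - 3)) ∧
    (conds l i 6 → l ≤ 5 * 3 ^ (i - 2)) ∧
    (conds l i 7 → l ≤ 5 * 4 * 3 ^ (i - 4) * 2) ∧
    (conds l i 8 → l ≤ 4 * 3 ^ (i - 2)) ∧
    (conds l i 9 → l ≤ 4 ^ 2 * 3 ^ (i - 4) * 2) ∧
    (conds l i 10 → l ≤ 5 * 3 ^ (i - 3) * 2) := by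
  have split : ∀ k : ℕ, k ≤ i → 3 ^ i = 3 ^ k * 3 ^ (i - k) := by
    intro k hk
    rw [← pow_add]
    congr 1
    omega
  refine ⟨fun _ => hi, ?_, ?_, ?_, ?_, ?_, ?_, ?_, ?_, ?_, ?_⟩
  · rintro (⟨h1, h2, h3⟩ | ⟨h1, h2, h3, h4⟩)
    · have := split 2 h3; omega
    · clear hmin split
      interval_cases i <;> simp_all <;> omega
  · rintro ⟨h1, h2, h3⟩
    have := split 4 h3; omega
  · rintro ⟨h1, h2, h3⟩
    have := split 3 h3; omega
  · rintro (⟨h1, h2, h3⟩ | ⟨h1, h2, h3⟩ | ⟨h1, h2, h3⟩)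
    · have := split 1 h3; omega
    · rcases Nat.eq_zero_or_pos i with h | h
      · subst h; clear hmin split; simp_all; omega
      · have := split 1 h; omega
    · clear hmin split
      interval_cases i <;> simp_all <;> omega
  · rintro ⟨h1, h2, h3⟩
    have := split 3 h3; omega
  · rintro (⟨h1, h2, h3⟩ | ⟨h1, h2, h3, h4⟩)
    · have := split 2 h3; omega
    · clear hmin split
      interval_cases i <;> simp_all <;> omega
  · rintro ⟨h1, h2, h3⟩
    have := split 4 h3; omega
  · rintro (⟨h1, h2, h3⟩ | ⟨h1, h2, h3⟩ | ⟨h1, h2, h3⟩)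
    · have := split 2 h3; omega
    · subst h3; clear hmin split; simp_all; omega
    · clear hmin split
      interval_cases i <;> simp_all <;> omega
  · rintro ⟨h1, h2, h3⟩
    have := split 4 h3; omega
  · rintro ⟨h1, h2, h3⟩
    have := split 3 h3; omega
end

section
/- In each of the eleven cases of Theorem 1, the solution satisfies the necessary minimality constraints: the product of all arities is at least l, and the product divided by any single arity is strictly less than l. -/
/-- In each of the eleven cases of Theorem 1, the prescribed arities satisfy the
minimality constraints: the product `P = 5^h₅·4^h₄·3^h₃·2^h₂` is at least `l`,
and `P/a < l` (i.e. `P < a·l`) for each arity `a` occurring in the multiset. -/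
theorem eleven_cases_minimality (l i : ℕ) (hl : 2 ≤ l)
    (hi : l ≤ 3 ^ i) (hmin : ∀ j : ℕ, l ≤ 3 ^ j → i ≤ j) :
    (conds l i 0 → l ≤ 3 ^ i ∧ 3 ^ i < 3 * l) ∧
    (conds l i 1 → l ≤ 2 * 4 * 3 ^ (i - 2) ∧ 2 * 4 * 3 ^ (i - 2) < 2 * l ∧
      2 * 4 * 3 ^ (i - 2) < 4 * l ∧ (2 < i → 2 * 4 * 3 ^ (i - 2) < 3 * l)) ∧
    (conds l i 2 → l ≤ 4 ^ 3 * 3 ^ (i - 4) ∧ 4 ^ 3 * 3 ^ (i - 4) < 4 * l ∧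
      (4 < i → 4 ^ 3 * 3 ^ (i - 4) < 3 * l)) ∧
    (conds l i 3 → l ≤ 5 * 4 * 3 ^ (i - 3) ∧ 5 * 4 * 3 ^ (i - 3) < 5 * l ∧
      5 * 4 * 3 ^ (i - 3) < 4 * l ∧ (3 < i → 5 * 4 * 3 ^ (i - 3) < 3 * l)) ∧
    (conds l i 4 → l ≤ 2 * 3 ^ (i - 1) ∧ 2 * 3 ^ (i - 1) < 2 * l ∧
      (1 < i → 2 * 3 ^ (i - 1) < 3 * l)) ∧
    (conds l i 5 → l ≤ 4 ^ 2 * 3 ^ (i - 3) ∧ 4 ^ 2 * 3 ^ (i - 3) < 4 * l ∧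
      (3 < i → 4 ^ 2 * 3 ^ (i - 3) < 3 * l)) ∧
    (conds l i 6 → l ≤ 5 * 3 ^ (i - 2) ∧ 5 * 3 ^ (i - 2) < 5 * l ∧
      (2 < i → 5 * 3 ^ (i - 2) < 3 * l)) ∧
    (conds l i 7 → l ≤ 2 * 5 * 4 * 3 ^ (i - 4) ∧ 2 * 5 * 4 * 3 ^ (i - 4) < 5 * l ∧
      2 * 5 * 4 * 3 ^ (i - 4) < 4 * l ∧ 2 * 5 * 4 * 3 ^ (i - 4) < 2 * l ∧
      (4 < i → 2 * 5 * 4 * 3 ^ (i - 4) < 3 * l)) ∧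
    (conds l i 8 → l ≤ 4 * 3 ^ (i - 2) ∧ 4 * 3 ^ (i - 2) < 4 * l ∧
      (2 < i → 4 * 3 ^ (i - 2) < 3 * l)) ∧
    (conds l i 9 → l ≤ 2 * 4 ^ 2 * 3 ^ (i - 4) ∧ 2 * 4 ^ 2 * 3 ^ (i - 4) < 4 * l ∧
      2 * 4 ^ 2 * 3 ^ (i - 4) < 2 * l ∧ (4 < i → 2 * 4 ^ 2 * 3 ^ (i - 4) < 3 * l)) ∧
    (conds l i 10 → l ≤ 2 * 5 * 3 ^ (i - 3) ∧ 2 * 5 * 3 ^ (i - 3) < 5 * l ∧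
      2 * 5 * 3 ^ (i - 3) < 2 * l ∧ (3 < i → 2 * 5 * 3 ^ (i - 3) < 3 * l)) := by
  have hlt : ∀ j, j < i → 3 ^ j < l := by
    intro j hj
    by_contra h
    exact absurd (hmin j (by omega)) (by omega)
  refine ⟨?_, ?_, ?_, ?_, ?_, ?_, ?_, ?_, ?_, ?_, ?_⟩ <;>
    intro hc <;> simp only [conds] at hc
  -- case 0
  · have hx : 1 ≤ 3 ^ i := Nat.one_le_pow _ _ (by norm_num)
    rcases hc with ⟨h1, h2⟩ | ⟨h1, h2⟩ <;> exact ⟨hi, by omega⟩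
  -- case 1 (k = 2)
  · have hk : 2 ≤ i := by rcases hc with ⟨_, _, h⟩ | ⟨h, _⟩ <;> exact h
    obtain ⟨e, rfl, he⟩ : ∃ e, i = 2 + e ∧ i - 2 = e := ⟨i - 2, by omega, by omega⟩
    rw [he]
    rw [show (3:ℕ) ^ (2 + e) = 9 * 3 ^ e by rw [pow_add]; ring] at hc hi
    have hx : 1 ≤ 3 ^ e := Nat.one_le_pow _ _ (by norm_num)
    have hcond : 2 < 2 + e → 2 * 4 * 3 ^ e < 3 * l := by
      intro h2
      obtain ⟨f, rfl⟩ : ∃ f, e = 1 + f := ⟨e - 1, by omega⟩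
      rw [show (3:ℕ) ^ (1 + f) = 3 * 3 ^ f by rw [pow_add]; ring] at hc ⊢
      have hy : 1 ≤ 3 ^ f := Nat.one_le_pow _ _ (by norm_num)
      rcases hc with ⟨h1, h2, _⟩ | ⟨_, _, h1, h2⟩ <;> omega
    rcases hc with ⟨h1, h2, _⟩ | ⟨_, _, h1, h2⟩ <;>
      exact ⟨by omega, by omega, by omega, hcond⟩
  -- case 2 (k = 4)
  · obtain ⟨h1, h2, hk⟩ := hc
    obtain ⟨e, rfl, he⟩ : ∃ e, i = 4 + e ∧ i - 4 = e := ⟨i - 4, by omega, by omega⟩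
    rw [he]
    rw [show (3:ℕ) ^ (4 + e) = 81 * 3 ^ e by rw [pow_add]; ring] at h1 h2
    have hx : 1 ≤ 3 ^ e := Nat.one_le_pow _ _ (by norm_num)
    refine ⟨by omega, by omega, ?_⟩
    intro h3
    obtain ⟨f, rfl⟩ : ∃ f, e = 1 + f := ⟨e - 1, by omega⟩
    rw [show (3:ℕ) ^ (1 + f) = 3 * 3 ^ f by rw [pow_add]; ring] at h1 h2 ⊢
    have hy : 1 ≤ 3 ^ f := Nat.one_le_pow _ _ (by norm_num)
    omega
  -- case 3 (k = 3)
  · obtain ⟨h1, h2, hk⟩ := hc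
    obtain ⟨e, rfl, he⟩ : ∃ e, i = 3 + e ∧ i - 3 = e := ⟨i - 3, by omega, by omega⟩
    rw [he]
    rw [show (3:ℕ) ^ (3 + e) = 27 * 3 ^ e by rw [pow_add]; ring] at h1 h2
    have hx : 1 ≤ 3 ^ e := Nat.one_le_pow _ _ (by norm_num)
    refine ⟨by omega, by omega, by omega, ?_⟩
    intro h3
    obtain ⟨f, rfl⟩ : ∃ f, e = 1 + f := ⟨e - 1, by omega⟩
    rw [show (3:ℕ) ^ (1 + f) = 3 * 3 ^ f by rw [pow_add]; ring] at h1 h2 ⊢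
    have hy : 1 ≤ 3 ^ f := Nat.one_le_pow _ _ (by norm_num)
    omega
  -- case 4 (k = 1)
  · have hk : 1 ≤ i := by
      by_contra h
      have h0 : i = 0 := by omega
      subst h0
      norm_num at hi
      omega
    obtain ⟨e, rfl, he⟩ : ∃ e, i = 1 + e ∧ i - 1 = e := ⟨i - 1, by omega, by omega⟩
    rw [he]
    rw [show (3:ℕ) ^ (1 + e) = 3 * 3 ^ e by rw [pow_add]; ring] at hc hi
    have hltx : 3 ^ e < l := hlt e (by omega)
    have hx : 1 ≤ 3 ^ e := Nat.one_le_pow _ _ (by norm_num)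
    have hcond : 1 < 1 + e → 2 * 3 ^ e < 3 * l := by
      intro h2
      obtain ⟨f, rfl⟩ : ∃ f, e = 1 + f := ⟨e - 1, by omega⟩
      rw [show (3:ℕ) ^ (1 + f) = 3 * 3 ^ f by rw [pow_add]; ring] at hltx ⊢
      have hy : 1 ≤ 3 ^ f := Nat.one_le_pow _ _ (by norm_num)
      omega
    rcases hc with ⟨h1, h2, _⟩ | ⟨h1, h2, _⟩ | ⟨h1, h2, _⟩ <;>
      exact ⟨by omega, by omega, hcond⟩
  -- case 5 (k = 3)
  · obtain ⟨h1, h2, hk⟩ := hc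
    obtain ⟨e, rfl, he⟩ : ∃ e, i = 3 + e ∧ i - 3 = e := ⟨i - 3, by omega, by omega⟩
    rw [he]
    rw [show (3:ℕ) ^ (3 + e) = 27 * 3 ^ e by rw [pow_add]; ring] at h1 h2
    have hx : 1 ≤ 3 ^ e := Nat.one_le_pow _ _ (by norm_num)
    refine ⟨by omega, by omega, ?_⟩
    intro h3
    obtain ⟨f, rfl⟩ : ∃ f, e = 1 + f := ⟨e - 1, by omega⟩
    rw [show (3:ℕ) ^ (1 + f) = 3 * 3 ^ f by rw [pow_add]; ring] at h1 h2 ⊢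
    have hy : 1 ≤ 3 ^ f := Nat.one_le_pow _ _ (by norm_num)
    omega
  -- case 6 (k = 2)
  · have hk : 2 ≤ i := by rcases hc with ⟨_, _, h⟩ | ⟨_, _, h, _⟩ <;> exact h
    obtain ⟨e, rfl, he⟩ : ∃ e, i = 2 + e ∧ i - 2 = e := ⟨i - 2, by omega, by omega⟩
    rw [he]
    rw [show (3:ℕ) ^ (2 + e) = 9 * 3 ^ e by rw [pow_add]; ring] at hc
    have hltx : 3 * 3 ^ e < l := by
      have := hlt (1 + e) (by omega)
      rwa [show (3:ℕ) ^ (1 + e) = 3 * 3 ^ e by rw [pow_add]; ring] at this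
    have hx : 1 ≤ 3 ^ e := Nat.one_le_pow _ _ (by norm_num)
    have hcond : 2 < 2 + e → 5 * 3 ^ e < 3 * l := by
      intro h2
      obtain ⟨f, rfl⟩ : ∃ f, e = 1 + f := ⟨e - 1, by omega⟩
      rw [show (3:ℕ) ^ (1 + f) = 3 * 3 ^ f by rw [pow_add]; ring] at hltx ⊢
      have hy : 1 ≤ 3 ^ f := Nat.one_le_pow _ _ (by norm_num)
      omega
    rcases hc with ⟨h1, h2, _⟩ | ⟨h1, h2, _⟩ <;> exact ⟨by omega, by omega, hcond⟩
  -- case 7 (k = 4)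
  · obtain ⟨h1, h2, hk⟩ := hc
    obtain ⟨e, rfl, he⟩ : ∃ e, i = 4 + e ∧ i - 4 = e := ⟨i - 4, by omega, by omega⟩
    rw [he]
    rw [show (3:ℕ) ^ (4 + e) = 81 * 3 ^ e by rw [pow_add]; ring] at h1 h2
    have hx : 1 ≤ 3 ^ e := Nat.one_le_pow _ _ (by norm_num)
    refine ⟨by omega, by omega, by omega, by omega, ?_⟩
    intro h3
    obtain ⟨f, rfl⟩ : ∃ f, e = 1 + f := ⟨e - 1, by omega⟩
    rw [show (3:ℕ) ^ (1 + f) = 3 * 3 ^ f by rw [pow_add]; ring] at h1 h2 ⊢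
    have hy : 1 ≤ 3 ^ f := Nat.one_le_pow _ _ (by norm_num)
    omega
  -- case 8 (k = 2)
  · have hk : 2 ≤ i := by
      rcases hc with ⟨_, _, h⟩ | ⟨_, _, h⟩ | ⟨h1, _, h2⟩
      · exact h
      · omega
      · by_contra h
        interval_cases i <;> norm_num at h1 <;> omega
    obtain ⟨e, rfl, he⟩ : ∃ e, i = 2 + e ∧ i - 2 = e := ⟨i - 2, by omega, by omega⟩
    rw [he]
    rw [show (3:ℕ) ^ (2 + e) = 9 * 3 ^ e by rw [pow_add]; ring] at hc
    have hltx : 3 * 3 ^ e < l := by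
      have := hlt (1 + e) (by omega)
      rwa [show (3:ℕ) ^ (1 + e) = 3 * 3 ^ e by rw [pow_add]; ring] at this
    have hx : 1 ≤ 3 ^ e := Nat.one_le_pow _ _ (by norm_num)
    have hcond : 2 < 2 + e → 4 * 3 ^ e < 3 * l := by
      intro h2
      obtain ⟨f, rfl⟩ : ∃ f, e = 1 + f := ⟨e - 1, by omega⟩
      rw [show (3:ℕ) ^ (1 + f) = 3 * 3 ^ f by rw [pow_add]; ring] at hltx ⊢
      have hy : 1 ≤ 3 ^ f := Nat.one_le_pow _ _ (by norm_num)
      omega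
    rcases hc with ⟨h1, h2, _⟩ | ⟨h1, h2, _⟩ | ⟨h1, h2, _⟩ <;>
      exact ⟨by omega, by omega, hcond⟩
  -- case 9 (k = 4)
  · obtain ⟨h1, h2, hk⟩ := hc
    obtain ⟨e, rfl, he⟩ : ∃ e, i = 4 + e ∧ i - 4 = e := ⟨i - 4, by omega, by omega⟩
    rw [he]
    rw [show (3:ℕ) ^ (4 + e) = 81 * 3 ^ e by rw [pow_add]; ring] at h1 h2
    have hx : 1 ≤ 3 ^ e := Nat.one_le_pow _ _ (by norm_num)
    refine ⟨by omega, by omega, by omega, ?_⟩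
    intro h3
    obtain ⟨f, rfl⟩ : ∃ f, e = 1 + f := ⟨e - 1, by omega⟩
    rw [show (3:ℕ) ^ (1 + f) = 3 * 3 ^ f by rw [pow_add]; ring] at h1 h2 ⊢
    have hy : 1 ≤ 3 ^ f := Nat.one_le_pow _ _ (by norm_num)
    omega
  -- case 10 (k = 3)
  · obtain ⟨h1, h2, hk⟩ := hc
    obtain ⟨e, rfl, he⟩ : ∃ e, i = 3 + e ∧ i - 3 = e := ⟨i - 3, by omega, by omega⟩
    rw [he]
    rw [show (3:ℕ) ^ (3 + e) = 27 * 3 ^ e by rw [pow_add]; ring] at h1 h2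
    have hx : 1 ≤ 3 ^ e := Nat.one_le_pow _ _ (by norm_num)
    refine ⟨by omega, by omega, by omega, ?_⟩
    intro h3
    obtain ⟨f, rfl⟩ : ∃ f, e = 1 + f := ⟨e - 1, by omega⟩
    rw [show (3:ℕ) ^ (1 + f) = 3 * 3 ^ f by rw [pow_add]; ring] at h1 h2 ⊢
    have hy : 1 ≤ 3 ^ f := Nat.one_le_pow _ _ (by norm_num)
    omega
end
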